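/- The two posterior computations in the Stone–Dawid marginalization paradox can never agree: there do not exist a measurable function π : (0, ∞) → [0, ∞) that is not Lebesgue-almost-everywhere zero and a function c : (0, ∞) → (0, ∞) such that for every z > 0, θ π(θ)/(θ + z)³ = c(z) · θ π(θ)/(θ + z)² holds for Lebesgue-almost-every θ ∈ (0, ∞). -/

import Mathlib

open MeasureTheory
open scoped ENNReal

/-- The two posterior computations in the Stone–Dawid marginalization paradox
can never agree: there is no measurable `π : (0,∞) → [0,∞)`, not Lebesgue-a.e.
zero, and no `c : (0,∞) → (0,∞)` such that for every `z > 0`,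
`θπ(θ)/(θ+z)³ = c(z) θπ(θ)/(θ+z)²` for Lebesgue-a.e. `θ > 0`. -/
theorem stone_dawid_no_agreement :
    ¬ ∃ (prior : ℝ → ℝ) (c : ℝ → ℝ),
        Measurable prior ∧
        (∀ θ ∈ Set.Ioi (0 : ℝ), 0 ≤ prior θ) ∧
        ¬ (∀ᵐ θ ∂(volume.restrict (Set.Ioi (0 : ℝ))), prior θ = 0) ∧
        (∀ z ∈ Set.Ioi (0 : ℝ), 0 < c z) ∧
        (∀ z ∈ Set.Ioi (0 : ℝ),
          ∀ᵐ θ ∂(volume.restrict (Set.Ioi (0 : ℝ))),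
            θ * prior θ / (θ + z) ^ 3 = c z * (θ * prior θ / (θ + z) ^ 2)) := by
  rintro ⟨p, c, hm, hnn, hne, hcpos, heq⟩
  have h1 : (1 : ℝ) ∈ Set.Ioi (0 : ℝ) := by norm_num
  have hk : 0 < c 1 := hcpos 1 h1
  set a : ℝ := 1 / c 1 - 1 with ha
  have hane : ∀ᵐ θ : ℝ ∂(volume.restrict (Set.Ioi (0 : ℝ))), θ ≠ a := by
    refine ae_restrict_of_ae ?_
    rw [ae_iff]
    simpa using measure_singleton a
  apply hne
  filter_upwards [heq 1 h1, hane, ae_restrict_mem measurableSet_Ioi]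
    with θ hθeq hθa hθpos
  by_contra hp
  have hθ0 : (0 : ℝ) < θ := hθpos
  have ht : (0 : ℝ) < θ + 1 := by linarith
  have hmul : θ * p θ ≠ 0 := mul_ne_zero (ne_of_gt hθ0) hp
  have ht' : (θ + 1 : ℝ) ≠ 0 := ne_of_gt ht
  have key : (1 : ℝ) = c 1 * (θ + 1) := by
    field_simp at hθeq
    have h3 : (θ * p θ) * (θ + 1) ^ 2 * (1 - c 1 * (θ + 1)) = 0 := by
      linear_combination (θ * p θ) * (θ + 1) ^ 2 * hθeq
    have h4 : (θ * p θ) * (θ + 1) ^ 2 ≠ 0 := mul_ne_zero hmul (pow_ne_zero _ ht')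
    have h5 : 1 - c 1 * (θ + 1) = 0 := by
      rcases mul_eq_zero.mp h3 with h | h
      · exact absurd h h4
      · exact h
    linarith
  apply hθa
  rw [ha]
  field_simp
  linarith [key]
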